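/- arXiv:1211.3649 — 8 statements merged into one kernel-verified Lean document; each statement's English description precedes it below -/
import Mathlib

section
/- The map sending a 2×2 matrix [[a,b],[c,d]] with entries in GF(q) and determinant ad+bc=1 (q even, so ad-bc=ad+bc) to the 4×4 matrix [[a^2,0,σab,b^2],[ac,1,σbc,bd],[0,0,1,0],[c^2,0,σcd,d^2]] is an injective group homomorphism from SL(2,q) into GL(4,q). -/
/-- The 4×4 matrix associated to a 2×2 matrix `[[a,b],[c,d]]`. -/
def phiMat {F : Type*} [CommRing F] (σ a b c d : F) : Matrix (Fin 4) (Fin 4) F :=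
  !![a^2, 0, σ*a*b, b^2;
     a*c, 1, σ*b*c, b*d;
     0,   0, 1,     0;
     c^2, 0, σ*c*d, d^2]

lemma phiMat_one {F : Type*} [CommRing F] (σ : F) : phiMat σ 1 0 0 1 = 1 := by
  ext i j
  fin_cases i <;> fin_cases j <;> simp [phiMat, Matrix.one_apply, Matrix.vecHead, Matrix.vecTail]

lemma phiMat_mul {F : Type*} [CommRing F] (h2 : (2 : F) = 0) (σ a b c d A B C D : F)
    (h1 : a * d - b * c = 1) (hB : A * D - B * C = 1) :
    phiMat σ a b c d * phiMat σ A B C D =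
      phiMat σ (a*A + b*C) (a*B + b*D) (c*A + d*C) (c*B + d*D) := by
  ext i j
  fin_cases i <;> fin_cases j <;>
    simp [phiMat, Matrix.mul_apply, Fin.sum_univ_four, Matrix.vecHead, Matrix.vecTail]
  · linear_combination (-(a*b*A*C)) * h2
  · linear_combination (-(a*b*σ)) * hB + (-(a*b*B*C*σ)) * h2
  · linear_combination (-(a*b*B*D)) * h2
  · linear_combination (-(A*C)) * h1 + (-(b*c*A*C)) * h2
  · linear_combination (-(B*C*σ)) * h1 + (-(b*c*σ)) * hB + (-(b*c*B*C*σ)) * h2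
  · linear_combination (-(B*D)) * h1 + (-(b*c*B*D)) * h2
  · linear_combination (-(c*d*A*C)) * h2
  · linear_combination (-(c*d*σ)) * hB + (-(c*d*B*C*σ)) * h2
  · linear_combination (-(c*d*B*D)) * h2

lemma sq_inj_of_char2 {F : Type*} [Field F] (h2 : (2 : F) = 0) {a b : F}
    (h : a ^ 2 = b ^ 2) : a = b := by
  have hz : (a - b) ^ 2 = 0 := by linear_combination h + (b ^ 2 - a * b) * h2
  have := pow_eq_zero_iff (n := 2) (by norm_num) |>.mp hz
  exact sub_eq_zero.mp this

theorem stmt0 (q : ℕ) (F : Type) [Field F] [Fintype F]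
    (hq : Fintype.card F = q) (hchar : ringChar F = 2) (σ : F) :
    ∃ f : Matrix.SpecialLinearGroup (Fin 2) F →* Matrix.GeneralLinearGroup (Fin 4) F,
      Function.Injective f ∧
      ∀ M : Matrix.SpecialLinearGroup (Fin 2) F,
        ((f M : Matrix (Fin 4) (Fin 4) F)) =
          phiMat σ ((M : Matrix (Fin 2) (Fin 2) F) 0 0) ((M : Matrix (Fin 2) (Fin 2) F) 0 1)
            ((M : Matrix (Fin 2) (Fin 2) F) 1 0) ((M : Matrix (Fin 2) (Fin 2) F) 1 1) := by
  have h2 : (2 : F) = 0 := by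
    haveI := ringChar.eq_iff.mp hchar
    exact_mod_cast CharP.cast_eq_zero F 2
  have hdet : ∀ M : Matrix.SpecialLinearGroup (Fin 2) F,
      (M : Matrix (Fin 2) (Fin 2) F) 0 0 * (M : Matrix (Fin 2) (Fin 2) F) 1 1 -
        (M : Matrix (Fin 2) (Fin 2) F) 0 1 * (M : Matrix (Fin 2) (Fin 2) F) 1 0 = 1 := by
    intro M
    have := M.2
    rwa [Matrix.det_fin_two] at this
  set P : Matrix.SpecialLinearGroup (Fin 2) F → Matrix (Fin 4) (Fin 4) F := fun M =>
    phiMat σ ((M : Matrix (Fin 2) (Fin 2) F) 0 0) ((M : Matrix (Fin 2) (Fin 2) F) 0 1)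
      ((M : Matrix (Fin 2) (Fin 2) F) 1 0) ((M : Matrix (Fin 2) (Fin 2) F) 1 1) with hP
  have key : ∀ M N : Matrix.SpecialLinearGroup (Fin 2) F, P (M * N) = P M * P N := by
    intro M N
    rw [hP]
    simp only [Matrix.SpecialLinearGroup.coe_mul, Matrix.mul_apply, Fin.sum_univ_two]
    exact (phiMat_mul h2 σ _ _ _ _ _ _ _ _ (hdet M) (hdet N)).symm
  have hPone : P 1 = 1 := by
    rw [hP]
    simp only [Matrix.SpecialLinearGroup.coe_one, Matrix.one_apply_eq, Matrix.one_apply_ne,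
      Fin.zero_eq_one_iff, Fin.one_eq_zero_iff, Nat.succ_ne_self, ne_eq, not_false_eq_true,
      OfNat.ofNat_ne_one, OfNat.one_ne_ofNat]
    exact phiMat_one σ
  have hinv : ∀ M : Matrix.SpecialLinearGroup (Fin 2) F,
      ∀ x y z w : F, x = (M : Matrix (Fin 2) (Fin 2) F) 0 0 → y = (M : Matrix (Fin 2) (Fin 2) F) 0 1 →
      z = (M : Matrix (Fin 2) (Fin 2) F) 1 0 → w = (M : Matrix (Fin 2) (Fin 2) F) 1 1 →
      phiMat σ x y z w * phiMat σ w y z x = 1 := by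
    intro M x y z w hx hy hz hw
    have hd : x * w - y * z = 1 := by rw [hx, hy, hz, hw]; exact hdet M
    have h1' : w * x - y * z = 1 := by linear_combination hd
    rw [phiMat_mul h2 σ x y z w w y z x hd h1']
    have e1 : x * w + y * z = 1 := by linear_combination hd + y * z * h2
    have e2 : x * y + y * x = 0 := by linear_combination x * y * h2
    have e3 : z * w + w * z = 0 := by linear_combination z * w * h2
    have e4 : z * y + w * x = 1 := by linear_combination hd + y * z * h2
    rw [e1, e2, e3, e4]
    exact phiMat_one σ
  refine ⟨{ toFun := fun M => ⟨P M, P M⁻¹, ?_, ?_⟩, map_one' := ?_, map_mul' := ?_ }, ?_, ?_⟩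
  · rw [← key, mul_inv_cancel, hPone]
  · rw [← key, inv_mul_cancel, hPone]
  · exact Units.ext hPone
  · intro M N
    exact Units.ext (key M N)
  · intro M N hMN
    have h : P M = P N := congrArg Units.val hMN
    rw [hP] at h
    simp only at h
    set a := (M : Matrix (Fin 2) (Fin 2) F) 0 0
    set b := (M : Matrix (Fin 2) (Fin 2) F) 0 1
    set c := (M : Matrix (Fin 2) (Fin 2) F) 1 0
    set d := (M : Matrix (Fin 2) (Fin 2) F) 1 1
    set a' := (N : Matrix (Fin 2) (Fin 2) F) 0 0
    set b' := (N : Matrix (Fin 2) (Fin 2) F) 0 1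
    set c' := (N : Matrix (Fin 2) (Fin 2) F) 1 0
    set d' := (N : Matrix (Fin 2) (Fin 2) F) 1 1
    have ha : a = a' := sq_inj_of_char2 h2 (by
      have := congrFun (congrFun h 0) 0; simpa [phiMat] using this)
    have hb : b = b' := sq_inj_of_char2 h2 (by
      have := congrFun (congrFun h 0) 3; simpa [phiMat] using this)
    have hc : c = c' := sq_inj_of_char2 h2 (by
      have := congrFun (congrFun h 3) 0; simpa [phiMat] using this)
    have hd : d = d' := sq_inj_of_char2 h2 (by
      have := congrFun (congrFun h 3) 3; simpa [phiMat] using this)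
    apply Subtype.ext
    ext i j
    fin_cases i <;> fin_cases j <;> assumption
  · intro M
    rfl
end

section
/- The group G = {[[a^2,0,σab,b^2],[ac,1,σbc,bd],[0,0,1,0],[c^2,0,σcd,d^2]] : a,b,c,d ∈ GF(q), ad+bc=1} acts transitively on the q+1 points of the conic C = {(0:0:0:1)} ∪ {(1:s:0:s^2) : s ∈ GF(q)} and fixes the nucleus N=(0:1:0:0). -/
def conicSet (F : Type*) [Field F] : Set (Fin 4 → F) :=
  {v | v = ![0, 0, 0, 1] ∨ ∃ s : F, v = ![1, s, 0, s^2]}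

theorem stmt4 (F : Type) [Field F] [Fintype F] (hchar : ringChar F = 2) (σ : F)
    (hirr : Irreducible (Polynomial.X^2 + Polynomial.C σ * Polynomial.X + 1 : Polynomial F)) :
    (∀ a b c d : F, a*d + b*c = 1 →
      ∃ lam : F, lam ≠ 0 ∧
        (phiMat σ a b c d).mulVec ![0, 1, 0, 0] = lam • ![0, 1, 0, 0]) ∧
    (∀ u v : Fin 4 → F, u ∈ conicSet F → v ∈ conicSet F →
      ∃ a b c d : F, a*d + b*c = 1 ∧
        ∃ lam : F, lam ≠ 0 ∧ (phiMat σ a b c d).mulVec u = lam • v) := by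
  haveI : CharP F 2 := hchar ▸ ringChar.charP F
  have h2 : (2 : F) = 0 := by exact_mod_cast CharP.cast_eq_zero F 2
  constructor
  · intro a b c d _
    refine ⟨1, one_ne_zero, ?_⟩
    funext i
    fin_cases i <;>
      simp [phiMat, Matrix.mulVec, dotProduct, Fin.sum_univ_succ]
  · rintro u v (rfl | ⟨s, rfl⟩) (rfl | ⟨t, rfl⟩)
    · refine ⟨1, 0, 0, 1, by ring, 1, one_ne_zero, ?_⟩
      funext i
      fin_cases i <;>
        simp [phiMat, Matrix.mulVec, dotProduct, Fin.sum_univ_succ]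
    · refine ⟨0, 1, 1, t, by ring, 1, one_ne_zero, ?_⟩
      funext i
      fin_cases i <;>
        simp [phiMat, Matrix.mulVec, dotProduct, Fin.sum_univ_succ]
    · refine ⟨s, 1, 1, 0, by rw [mul_zero, zero_add, mul_one], 1, one_ne_zero, ?_⟩
      funext i
      fin_cases i <;>
          simp [phiMat, Matrix.mulVec, dotProduct, Fin.sum_univ_succ] <;>
          ring_nf <;>
          first
            | linear_combination s ^ 2 * h2
            | linear_combination s * h2
    · refine ⟨1, 0, s + t, 1, by ring, 1, one_ne_zero, ?_⟩
      funext i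
      fin_cases i <;>
          simp [phiMat, Matrix.mulVec, dotProduct, Fin.sum_univ_succ] <;>
          ring_nf <;>
          first
            | linear_combination s * h2
            | linear_combination (s * t + s ^ 2) * h2
end

section
/- The stabilizer in G of the point (1:0:0:0) consists exactly of the matrices [[a^2,0,σab,b^2],[0,1,0,bd],[0,0,1,0],[0,0,0,d^2]] with a,b,d ∈ GF(q) and ad=1, i.e., the images of upper triangular matrices in SL(2,q). -/
theorem stmt5 (F : Type) [Field F] [Fintype F] (hchar : ringChar F = 2) (σ : F)
    (a b c d : F) (habcd : a*d + b*c = 1) :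
    (∃ lam : F, lam ≠ 0 ∧
        (phiMat σ a b c d).mulVec ![1, 0, 0, 0] = lam • ![1, 0, 0, 0]) ↔
      (c = 0 ∧ a * d = 1 ∧
        phiMat σ a b c d =
          !![a^2, 0, σ*a*b, b^2;
             0,   1, 0,     b*d;
             0,   0, 1,     0;
             0,   0, 0,     d^2]) := by
  constructor
  · rintro ⟨lam, hlam, hv⟩
    have h1 := congrFun hv 1
    have h3 := congrFun hv 3
    simp [phiMat, Matrix.mulVec, dotProduct, Fin.sum_univ_four] at h1 h3
    have hc : c = 0 := by
      have h3' : c^2 = 0 := by simpa [sq] using h3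
      exact pow_eq_zero_iff (n := 2) two_ne_zero |>.mp h3'
    refine ⟨hc, by simpa [hc] using habcd, ?_⟩
    simp [phiMat, hc]
  · rintro ⟨hc, had, -⟩
    refine ⟨a^2, ?_, ?_⟩
    · have ha : a ≠ 0 := left_ne_zero_of_mul (had ▸ one_ne_zero)
      exact pow_ne_zero _ ha
    · funext i
      fin_cases i <;>
        simp [phiMat, hc, Matrix.mulVec, dotProduct, Fin.sum_univ_four]
end

section
/- The only element of G mapping the point (0:0:1:0) into the line {X1=0, X0=X3} of PG(3,q) and fixing the point (1:0:1:1) is the identity matrix. -/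
theorem stmt6 (F : Type) [Field F] [Fintype F] (hchar : ringChar F = 2) (σ : F)
    (hirr : Irreducible (Polynomial.X^2 + Polynomial.C σ * Polynomial.X + 1 : Polynomial F))
    (a b c d : F) (habcd : a*d + b*c = 1)
    (hline1 : (phiMat σ a b c d).mulVec ![0, 0, 1, 0] 1 = 0)
    (hline2 : (phiMat σ a b c d).mulVec ![0, 0, 1, 0] 0 =
              (phiMat σ a b c d).mulVec ![0, 0, 1, 0] 3)
    (hfix : ∃ lam : F, lam ≠ 0 ∧
      (phiMat σ a b c d).mulVec ![1, 0, 1, 1] = lam • ![1, 0, 1, 1]) :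
    phiMat σ a b c d = 1 := by
  have h2 : (2 : F) = 0 := by
    have := ringChar.Nat.cast_ringChar (R := F); rw [hchar] at this; exact_mod_cast this
  simp [phiMat, Matrix.mulVec, dotProduct, Fin.sum_univ_four] at hline1 hline2
  obtain ⟨lam, hlam, hfix⟩ := hfix
  have hf0 := congrFun hfix 0
  have hf2 := congrFun hfix 2
  simp [phiMat, Matrix.mulVec, dotProduct, Fin.sum_univ_four] at hf0 hf2
  -- σ ≠ 0
  have hσ : σ ≠ 0 := by
    rintro rfl
    have h2' : (2 : Polynomial F) = 0 := by
      rw [← map_ofNat (Polynomial.C : F →+* Polynomial F) 2, h2, map_zero]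
    have heq : (Polynomial.X^2 + Polynomial.C (0:F) * Polynomial.X + 1 : Polynomial F)
        = (Polynomial.X + 1) * (Polynomial.X + 1) := by
      simp only [map_zero, zero_mul, add_zero]
      linear_combination (-(Polynomial.X : Polynomial F)) * h2'
    rcases hirr.isUnit_or_isUnit heq with h | h <;>
    · have := Polynomial.degree_eq_zero_of_isUnit h
      rw [show ((Polynomial.X + 1 : Polynomial F)) = Polynomial.X + Polynomial.C 1 by simp,
        Polynomial.degree_X_add_C] at this
      exact one_ne_zero this
  -- reduce hline1 to b = 0 ∨ c = 0
  have hbc : b = 0 ∨ c = 0 := by tauto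
  have hb0 : b = 0 ∧ c = 0 := by
    rcases hbc with hb | hc
    · subst hb
      have had : a * d = 1 := by linear_combination habcd
      have hd : d ≠ 0 := fun h => by rw [h, mul_zero] at had; exact one_ne_zero had.symm
      have hcd : σ * (c * d) = 0 := by linear_combination -hline2
      refine ⟨rfl, ?_⟩
      rcases mul_eq_zero.mp hcd with h | h
      · exact absurd h hσ
      · rcases mul_eq_zero.mp h with h | h
        · exact h
        · exact absurd h hd
    · subst hc
      have had : a * d = 1 := by linear_combination habcd
      have ha : a ≠ 0 := fun h => by rw [h, zero_mul] at had; exact one_ne_zero had.symm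
      have hab : σ * (a * b) = 0 := by linear_combination hline2
      refine ⟨?_, rfl⟩
      rcases mul_eq_zero.mp hab with h | h
      · exact absurd h hσ
      · rcases mul_eq_zero.mp h with h | h
        · exact absurd h ha
        · exact h
  obtain ⟨hb, hc⟩ := hb0
  subst hb; subst hc
  simp at habcd hf0 hf2
  rw [← hf2] at hf0
  have ha1 : a = 1 := by
    have : (a - 1) * (a - 1) = 0 := by linear_combination hf0 + (1 - a) * h2
    have := mul_self_eq_zero.mp this
    exact sub_eq_zero.mp this
  subst ha1
  have hd1 : d = 1 := by linear_combination habcd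
  subst hd1
  ext i j
  fin_cases i <;> fin_cases j <;> simp [phiMat, Matrix.one_apply, Matrix.vecHead, Matrix.vecTail]
end

section
/- The stabilizer in G of the point R=(1:ξ:0:0) of PG(3,q^2), where ξ ∈ GF(q^2)\GF(q), is the subgroup of matrices with a=d=1, c=0 and b ∈ GF(q) arbitrary; in particular this stabilizer has order q. -/
lemma phiMat_mulVec (F K : Type) [Field F] [Field K] [Algebra F K] (σ a b c d : F) (ξ : K) :
    ((phiMat σ a b c d).map (algebraMap F K)).mulVec ![1, ξ, 0, 0] =
      ![algebraMap F K (a^2), algebraMap F K (a*c) + ξ, 0, algebraMap F K (c^2)] := by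
  funext i
  fin_cases i <;>
    simp [phiMat, Matrix.mulVec, dotProduct, Fin.sum_univ_four]

lemma key (F K : Type) [Field F] [Field K] [Algebra F K]
    (hchar : ringChar F = 2)
    (σ : F) (ξ : K) (hξ : ξ ∉ Set.range (algebraMap F K)) :
    ∀ a b c d : F, a*d + b*c = 1 →
      ((∃ lam : K, lam ≠ 0 ∧
          ((phiMat σ a b c d).map (algebraMap F K)).mulVec ![1, ξ, 0, 0] =
            lam • ![1, ξ, 0, 0]) ↔ (a = 1 ∧ d = 1 ∧ c = 0)) := by
  have hξ0 : ξ ≠ 0 := fun h => hξ ⟨0, by simp [h]⟩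
  have hinj : Function.Injective (algebraMap F K) := (algebraMap F K).injective
  haveI : CharP F 2 := hchar ▸ ringChar.charP F
  intro a b c d hdet
  constructor
  · rintro ⟨lam, hlam, heq⟩
    rw [phiMat_mulVec] at heq
    have h0 := congrFun heq 0
    have h1 := congrFun heq 1
    have h3 := congrFun heq 3
    simp at h0 h1 h3
    -- h3 : algebraMap F K (c^2) = 0
    have hc : c = 0 := by
      have : c ^ 2 = 0 := hinj (by simpa using h3)
      exact pow_eq_zero_iff (n := 2) (by norm_num) |>.mp this
    subst hc
    simp at h1
    -- h1 : ξ = lam * ξ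
    have hlam1 : lam = 1 := by
      have : (lam - 1) * ξ = 0 := by ring_nf; linear_combination -h1
      rcases mul_eq_zero.mp this with h | h
      · exact sub_eq_zero.mp h
      · exact absurd h hξ0
    have ha2 : a ^ 2 = 1 := by
      apply hinj
      rw [map_pow, map_one, h0, hlam1]
    have ha : a = 1 := by
      have : (a - 1) * (a + 1) = 0 := by ring_nf; linear_combination ha2
      rcases mul_eq_zero.mp this with h | h
      · exact sub_eq_zero.mp h
      · have := eq_neg_of_add_eq_zero_left h
        rw [this, CharTwo.neg_eq]
    subst ha
    refine ⟨rfl, ?_, rfl⟩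
    simpa using hdet
  · rintro ⟨rfl, rfl, rfl⟩
    refine ⟨1, one_ne_zero, ?_⟩
    rw [phiMat_mulVec]
    funext i
    fin_cases i <;> simp

theorem stmt7 (q : ℕ) (F K : Type) [Field F] [Fintype F] [Field K] [Fintype K] [Algebra F K]
    (hq : Fintype.card F = q) (hchar : ringChar F = 2) (hK : Fintype.card K = q^2)
    (σ : F) (ξ : K) (hξ : ξ ∉ Set.range (algebraMap F K)) :
    (∀ a b c d : F, a*d + b*c = 1 →
      ((∃ lam : K, lam ≠ 0 ∧
          ((phiMat σ a b c d).map (algebraMap F K)).mulVec ![1, ξ, 0, 0] =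
            lam • ![1, ξ, 0, 0]) ↔ (a = 1 ∧ d = 1 ∧ c = 0))) ∧
    Nat.card {g : F × F × F × F //
      g.1 * g.2.2.2 + g.2.1 * g.2.2.1 = 1 ∧
      ∃ lam : K, lam ≠ 0 ∧
        ((phiMat σ g.1 g.2.1 g.2.2.1 g.2.2.2).map (algebraMap F K)).mulVec ![1, ξ, 0, 0] =
          lam • ![1, ξ, 0, 0]} = q := by
  have hkey := key F K hchar σ ξ hξ
  refine ⟨hkey, ?_⟩
  have e : {g : F × F × F × F //
      g.1 * g.2.2.2 + g.2.1 * g.2.2.1 = 1 ∧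
      ∃ lam : K, lam ≠ 0 ∧
        ((phiMat σ g.1 g.2.1 g.2.2.1 g.2.2.2).map (algebraMap F K)).mulVec ![1, ξ, 0, 0] =
          lam • ![1, ξ, 0, 0]} ≃ F :=
    { toFun := fun s => s.1.2.1
      invFun := fun b => ⟨(1, b, 0, 1), by
        refine ⟨by ring, ?_⟩
        exact ((hkey 1 b 0 1 (by ring)).mpr ⟨rfl, rfl, rfl⟩)⟩
      left_inv := by
        rintro ⟨⟨a, b, c, d⟩, hdet, hst⟩
        obtain ⟨ha, hd, hc⟩ := (hkey a b c d hdet).mp hst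
        subst ha; subst hd; subst hc; rfl
      right_inv := fun b => rfl }
  rw [Nat.card_congr e, Nat.card_eq_fintype_card, hq]
end

section
/- Let q be even, ξ ∈ GF(q^2)\GF(q), σ ∈ GF(q)\{0}. The element A=[[1,0,σb,b^2],[0,1,0,b],[0,0,1,0],[0,0,0,1]] of G maps the point (ν, 0, ξ, σξ^{q+1}) (ν ∈ GF(q)) to a point on the line joining (1,ξ,0,0) and (ν,0,ξ,σξ^{q+1}) if and only if b=0 or b=(ξ+ξ^q)/ξ^{q+1}. -/
theorem stmt8 (q : ℕ) (F K : Type) [Field F] [Fintype F] [Field K] [Fintype K] [Algebra F K]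
    (hq : Fintype.card F = q) (hchar : ringChar F = 2) (hK : Fintype.card K = q^2)
    (σ : F) (hσ : σ ≠ 0) (ξ : K) (hξ : ξ ∉ Set.range (algebraMap F K))
    (ν b : F) :
    (((phiMat σ 1 b 0 1).map (algebraMap F K)).mulVec
        ![algebraMap F K ν, 0, ξ, (algebraMap F K σ) * ξ^(q+1)] ∈
      Submodule.span K
        ({![1, ξ, 0, 0],
          ![algebraMap F K ν, 0, ξ, (algebraMap F K σ) * ξ^(q+1)]} : Set (Fin 4 → K))) ↔
      (b = 0 ∨ algebraMap F K b = (ξ + ξ^q) / ξ^(q+1)) := by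
  have hinj : Function.Injective (algebraMap F K) := (algebraMap F K).injective
  have hξ0 : ξ ≠ 0 := by
    intro h; exact hξ ⟨0, by simp [h]⟩
  haveI : CharP F 2 := hchar ▸ ringChar.charP F
  haveI : CharP K 2 := charP_of_injective_ringHom hinj 2
  have htwo : (2 : K) = 0 := CharTwo.two_eq_zero
  set ν' := algebraMap F K ν with hν'
  set σ' := algebraMap F K σ with hσ'
  set b' := algebraMap F K b with hb'
  have hσ'0 : σ' ≠ 0 := fun h => hσ ((map_eq_zero (algebraMap F K)).mp h)
  have hξq1 : ξ^(q+1) ≠ 0 := pow_ne_zero _ hξ0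
  have hw : ((phiMat σ 1 b 0 1).map (algebraMap F K)).mulVec
        ![ν', 0, ξ, σ' * ξ^(q+1)] =
      ![ν' + σ'*b'*ξ + b'^2*(σ'*ξ^(q+1)), b'*(σ'*ξ^(q+1)), ξ, σ'*ξ^(q+1)] := by
    funext i
    fin_cases i <;>
      simp [phiMat, Matrix.mulVec, dotProduct, Fin.sum_univ_four, Matrix.map_apply,
        map_pow, map_mul, map_one, ← hb', ← hσ'] <;> ring
  rw [hw, Submodule.mem_span_pair]
  constructor
  · rintro ⟨α, β, hab⟩
    have h2' := congrFun hab 2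
    have h1' := congrFun hab 1
    have h0' := congrFun hab 0
    simp [Pi.smul_apply, smul_eq_mul] at h2' h1' h0'
    -- h2' : β * ξ = ξ, h1' : α * ξ = b' * (σ' * ξ^(q+1)), h0' : α + β * ν' = ...
    have hβ : β = 1 := by
      have := mul_right_cancel₀ hξ0 (by linear_combination h2' : β * ξ = 1 * ξ)
      exact this
    subst hβ
    by_cases hb0 : b = 0
    · exact Or.inl hb0
    right
    have hb'0 : b' ≠ 0 := fun h => hb0 ((map_eq_zero (algebraMap F K)).mp h)
    have hα : α = σ'*b'*ξ + b'^2*(σ'*ξ^(q+1)) := by linear_combination h0'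
    have hE : (σ'*b'*ξ) * (ξ + b'*ξ^(q+1) - ξ^q) = 0 := by
      rw [hα] at h1'
      linear_combination h1' - σ'*b'*(pow_succ ξ q)
    rcases mul_eq_zero.mp hE with h | h
    · exact absurd h (mul_ne_zero (mul_ne_zero hσ'0 hb'0) hξ0)
    · rw [eq_div_iff hξq1]
      linear_combination h - htwo * ξ
  · rintro (hb0 | hbv)
    · refine ⟨0, 1, ?_⟩
      have hb'0 : b' = 0 := by rw [hb', hb0]; simp
      funext i
      fin_cases i <;> simp [hb'0, Pi.smul_apply, smul_eq_mul]
    · refine ⟨b'*σ'*ξ^q, 1, ?_⟩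
      have hbξ : b' * ξ^(q+1) = ξ + ξ^q := by
        rw [hbv]; field_simp
      funext i
      fin_cases i <;>
        simp [Pi.smul_apply, smul_eq_mul]
      · linear_combination -σ'*b'*hbξ - htwo*(σ'*b'*ξ)
      · linear_combination b'*σ'*(pow_succ ξ q)
end

section
/- Let q be even, σ ∈ GF(q)\{0}, ξ ∈ GF(q^2)\GF(q). The polynomial x^2+σx+ξ^2 is reducible over GF(q^2) if and only if the polynomial x^2+σx+ξ^2+ξ^{2q} is reducible over GF(q). -/
lemma aux_sq_ker {R : Type} [Field R] (h2 : (2:R) = 0) (y : R) :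
    y ^ 2 + y = 0 ↔ y = 0 ∨ y = 1 := by
  constructor
  · intro h
    have hm : y * (y + 1) = 0 := by linear_combination h
    rcases mul_eq_zero.1 hm with h0 | h1
    · exact Or.inl h0
    · right; linear_combination h1 - h2
  · rintro (rfl | rfl)
    · ring
    · linear_combination h2

theorem stmt13 (q : ℕ) (F K : Type) [Field F] [Fintype F] [Field K] [Fintype K] [Algebra F K]
    (hq : Fintype.card F = q) (hchar : ringChar F = 2) (hK : Fintype.card K = q^2)
    (σ : F) (hσ : σ ≠ 0) (ξ : K) (hξ : ξ ∉ Set.range (algebraMap F K))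
    (η : F) (hη : algebraMap F K η = ξ^2 + (ξ^q)^2) :
    (∃ x : K, x^2 + (algebraMap F K σ) * x + ξ^2 = 0) ↔
      (∃ x : F, x^2 + σ * x + η = 0) := by
  haveI : Fact (Nat.Prime 2) := ⟨Nat.prime_two⟩
  haveI hF2 : CharP F 2 := hchar ▸ ringChar.charP F
  have hinj : Function.Injective (algebraMap F K) := (algebraMap F K).injective
  haveI hK2 : CharP K 2 := charP_of_injective_ringHom hinj 2
  obtain ⟨m, -, hqm⟩ := FiniteField.card F 2
  rw [hq] at hqm
  have hq1 : 1 < q := hqm ▸ Nat.one_lt_pow m.ne_zero one_lt_two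
  have hq0 : 0 < q := by omega
  -- char two facts
  have h2K : (2 : K) = 0 := CharTwo.two_eq_zero
  have h2F : (2 : F) = 0 := CharTwo.two_eq_zero
  have hfrob : ∀ a b : K, (a + b) ^ q = a ^ q + b ^ q := by
    intro a b; rw [hqm]; exact add_pow_char_pow a b 2 m
  -- pow_card facts
  have hxq : ∀ x : F, x ^ q = x := fun x => by rw [← hq]; exact FiniteField.pow_card x
  have hKq : ∀ y : K, (y ^ q) ^ q = y := fun y => by
    rw [← pow_mul, ← pow_two, ← hK]; exact FiniteField.pow_card y
  set ψ : F →+* K := algebraMap F K with hψ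
  have hψq : ∀ x : F, (ψ x) ^ q = ψ x := fun x => by rw [← map_pow, hxq]
  -- the additive homs
  set f : K →+ K := AddMonoidHom.mk' (fun y => y ^ 2 + y)
    (fun a b => by simp only [add_pow_char a b 2]; ring) with hf
  set g : K →+ K := AddMonoidHom.mk' (fun y => y ^ q + y)
    (fun a b => by simp only [hfrob a b]; ring) with hg
  set φ : F →+ K := ψ.toAddMonoidHom with hφ
  have hφa : ∀ x : F, φ x = ψ x := fun x => rfl
  have hinjφ : Function.Injective φ := hinj
  set E : AddSubgroup K := φ.range with hE
  set S : AddSubgroup K := (f.comp φ).range with hS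
  have hfa : ∀ y : K, f y = y ^ 2 + y := fun y => rfl
  have hga : ∀ y : K, g y = y ^ q + y := fun y => rfl
  have cardK : Nat.card K = q ^ 2 := by rw [Nat.card_eq_fintype_card, hK]
  have cardF : Nat.card F = q := by rw [Nat.card_eq_fintype_card, hq]
  have cardE : Nat.card E = q := by
    rw [← cardF]
    exact Nat.card_congr (AddMonoidHom.ofInjective hinjφ).toEquiv.symm
  -- E is the kernel of g
  have hEker : E = g.ker := by
    have hle : E ≤ g.ker := by
      rintro y ⟨x, rfl⟩
      rw [AddMonoidHom.mem_ker, hga, hφa, hψq]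
      linear_combination (ψ x) * h2K
    have hcard : Nat.card g.ker ≤ q := by
      classical
      set P : Polynomial K := Polynomial.X ^ q - Polynomial.X with hP
      have hPne : P ≠ 0 := FiniteField.X_pow_card_sub_X_ne_zero K hq1
      have hsub : (g.ker : Set K) ⊆ ↑P.roots.toFinset := by
        intro y hy
        have hy' : y ^ q + y = 0 := hy
        simp only [Finset.coe_sort_coe, Multiset.mem_toFinset, Finset.mem_coe,
          Polynomial.mem_roots', Polynomial.IsRoot.def, hP, Polynomial.eval_sub,
          Polynomial.eval_pow, Polynomial.eval_X]
        refine ⟨hPne, ?_⟩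
        linear_combination hy' - y * h2K
      calc Nat.card g.ker = (g.ker : Set K).ncard := Nat.card_coe_set_eq _
        _ ≤ (↑P.roots.toFinset : Set K).ncard := Set.ncard_le_ncard hsub (Finset.finite_toSet _)
        _ = P.roots.toFinset.card := Set.ncard_coe_finset _
        _ ≤ Multiset.card P.roots := Multiset.toFinset_card_le _
        _ ≤ P.natDegree := Polynomial.card_roots' P
        _ = q := FiniteField.X_pow_card_sub_X_natDegree_eq K hq1
    exact AddSubgroup.eq_of_le_of_card_ge hle (by rw [cardE]; exact hcard)
  have hEindex : E.index = q := by
    have h1 := AddSubgroup.card_mul_index E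
    rw [cardE, cardK] at h1
    have h2 : q * E.index = q * q := by rw [h1]; ring
    exact Nat.eq_of_mul_eq_mul_left hq0 h2
  -- range of g is E
  have hgrange : g.range = E := by
    have hle : g.range ≤ E := by
      rw [hEker]
      rintro y ⟨x, rfl⟩
      rw [AddMonoidHom.mem_ker, hga, hga, hfrob, hKq]
      linear_combination (x + x ^ q) * h2K
    have hgr_card : Nat.card g.range = q := by
      rw [← AddSubgroup.index_ker g, ← hEker, hEindex]
    exact AddSubgroup.eq_of_le_of_card_ge hle (by rw [cardE, hgr_card])
  -- kernel of f has 2 elements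
  have hkerf : Nat.card f.ker = 2 := by
    have hset : (f.ker : Set K) = {0, 1} := by
      ext y
      simp only [SetLike.mem_coe, AddMonoidHom.mem_ker, hfa, Set.mem_insert_iff,
        Set.mem_singleton_iff]
      exact aux_sq_ker h2K y
    calc Nat.card f.ker = (f.ker : Set K).ncard := Nat.card_coe_set_eq _
      _ = 2 := by rw [hset]; exact Set.ncard_pair zero_ne_one
  have cardR : 2 * Nat.card f.range = q ^ 2 := by
    have h1 := AddSubgroup.card_mul_index f.ker
    rw [hkerf, AddSubgroup.index_ker, cardK] at h1
    exact h1
  -- S ≤ E and card S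
  have hSE : S ≤ E := by
    rintro y ⟨x, rfl⟩
    exact ⟨x ^ 2 + x, by
      rw [AddMonoidHom.comp_apply, hfa, hφa, hφa, map_add, map_pow]⟩
  have cardS : 2 * Nat.card S = q := by
    have hkfφ : Nat.card (f.comp φ).ker = 2 := by
      have hset : ((f.comp φ).ker : Set F) = {0, 1} := by
        ext y
        simp only [SetLike.mem_coe, AddMonoidHom.mem_ker, AddMonoidHom.comp_apply, hfa, hφa,
          Set.mem_insert_iff, Set.mem_singleton_iff]
        rw [show (ψ y) ^ 2 + ψ y = ψ (y ^ 2 + y) by rw [map_add, map_pow],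
          show (0 : K) = ψ 0 by rw [map_zero]]
        rw [hinj.eq_iff]
        exact aux_sq_ker h2F y
      calc Nat.card (f.comp φ).ker = ((f.comp φ).ker : Set F).ncard := Nat.card_coe_set_eq _
        _ = 2 := by rw [hset]; exact Set.ncard_pair zero_ne_one
    have h1 := AddSubgroup.card_mul_index (f.comp φ).ker
    rw [hkfφ, AddSubgroup.index_ker, cardF] at h1
    exact h1
  -- index computations
  have hSindex : S.index = 2 * q := by
    have h1 := AddSubgroup.card_mul_index S
    rw [cardK] at h1
    have h2 : q * S.index = q * (2 * q) := by
      calc q * S.index = 2 * Nat.card S * S.index := by rw [cardS]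
        _ = 2 * (Nat.card S * S.index) := by ring
        _ = 2 * q ^ 2 := by rw [h1]
        _ = q * (2 * q) := by ring
    exact Nat.eq_of_mul_eq_mul_left hq0 h2
  have hrel : S.relIndex E = 2 := by
    have h1 := AddSubgroup.relIndex_mul_index hSE
    rw [hEindex, hSindex] at h1
    exact Nat.eq_of_mul_eq_mul_right hq0 h1
  -- the comap
  set C : AddSubgroup K := S.comap g with hC
  have hCindex : C.index = 2 := by
    rw [hC, AddSubgroup.index_comap, hgrange, hrel]
  have cardC : Nat.card C = Nat.card f.range := by
    have h1 := AddSubgroup.card_mul_index C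
    rw [hCindex, cardK] at h1
    omega
  have hcomm : ∀ x : K, g (f x) = f (g x) := by
    intro x
    rw [hga, hfa, hfa, hga, hfrob]
    have hc2 : (x ^ 2) ^ q = (x ^ q) ^ 2 := by
      rw [← pow_mul, ← pow_mul, mul_comm]
    linear_combination hc2 - (x ^ q * x) * h2K
  have hRC : f.range ≤ C := by
    rintro y ⟨x, rfl⟩
    have hgx : g x ∈ E := hgrange ▸ AddMonoidHom.mem_range.2 ⟨x, rfl⟩
    obtain ⟨w, hw⟩ := hgx
    refine AddSubgroup.mem_comap.2 ⟨w, ?_⟩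
    rw [AddMonoidHom.comp_apply, hw, ← hcomm x]
  have hmain : f.range = C :=
    AddSubgroup.eq_of_le_of_card_ge hRC (le_of_eq cardC)
  -- now the top-level equivalence
  set s : K := ψ σ with hsdef
  have hs : s ≠ 0 := fun h => hσ (hinj (by rw [map_zero]; exact h))
  set c : K := ξ ^ 2 / s ^ 2 with hc
  have stepA : (∃ x : K, x ^ 2 + ψ σ * x + ξ ^ 2 = 0) ↔ c ∈ f.range := by
    constructor
    · rintro ⟨x, hx⟩
      refine ⟨x / s, ?_⟩
      rw [hfa, hc, eq_div_iff (pow_ne_zero 2 hs)]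
      have expand : ((x / s) ^ 2 + x / s) * s ^ 2 = x ^ 2 + x * s := by
        field_simp
      rw [expand]
      linear_combination hx - ξ ^ 2 * h2K
    · rintro ⟨y, hy⟩
      rw [hfa] at hy
      refine ⟨s * y, ?_⟩
      have hyy : s ^ 2 * (y ^ 2 + y) = ξ ^ 2 := by
        rw [hy, hc]; field_simp
      linear_combination hyy + ξ ^ 2 * h2K
  have hgc : g c = φ (η / σ ^ 2) := by
    have hs2 : s ^ 2 = ψ (σ ^ 2) := (map_pow ψ σ 2).symm
    have hcq : c ^ q = (ξ ^ q) ^ 2 / s ^ 2 := by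
      rw [hc, div_pow, hs2, ← map_pow, hxq, ← pow_mul, mul_comm, pow_mul]
    rw [hga, hcq, hc, ← add_div, hφa, map_div₀, hη, hs2, add_comm]
  have stepC : c ∈ C ↔ ∃ u : F, u ^ 2 + u = η / σ ^ 2 := by
    rw [hC, AddSubgroup.mem_comap, hgc]
    constructor
    · rintro ⟨u, hu⟩
      refine ⟨u, hinj ?_⟩
      rw [AddMonoidHom.comp_apply, hfa, hφa] at hu
      rw [map_add, map_pow, hu]
      exact hφa _
    · rintro ⟨u, hu⟩
      refine ⟨u, ?_⟩
      rw [AddMonoidHom.comp_apply, hfa, hφa, ← map_pow, ← map_add, hu]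
      exact (hφa _).symm
  have stepD : (∃ u : F, u ^ 2 + u = η / σ ^ 2) ↔ ∃ x : F, x ^ 2 + σ * x + η = 0 := by
    constructor
    · rintro ⟨u, hu⟩
      refine ⟨σ * u, ?_⟩
      have huu : σ ^ 2 * (u ^ 2 + u) = η := by
        rw [hu]; field_simp
      linear_combination huu + η * h2F
    · rintro ⟨x, hx⟩
      refine ⟨x / σ, ?_⟩
      rw [eq_div_iff (pow_ne_zero 2 hσ)]
      have expand : ((x / σ) ^ 2 + x / σ) * σ ^ 2 = x ^ 2 + x * σ := by
        field_simp
      rw [expand]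
      linear_combination hx - η * h2F
  rw [stepA, hmain, stepC, stepD]
end

section
/- Let q be even, σ ∈ GF(q)\{0}, ξ ∈ GF(q^2)\GF(q), and let s=[[1,0,0,0],[0,1,σ,0],[0,0,1,0],[0,0,0,1]] and g=[[0,0,0,1],[0,1,σ,0],[0,0,1,0],[1,0,0,0]]. Then g belongs to G (it is the image of [[0,1],[1,0]] ∈ SL(2,q), noting 0·0+1·1=1 in characteristic 2), s commutes with every element of G, and s and g agree on the point P=(ξ:0:1:ξ) of PG(3,q^2): s(P)=g(P)=(ξ:σ:1:ξ). -/
theorem stmt19 (q : ℕ) (F K : Type) [Field F] [Fintype F] [Field K] [Fintype K] [Algebra F K]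
    (hq : Fintype.card F = q) (hchar : ringChar F = 2) (hK : Fintype.card K = q^2)
    (σ : F) (hσ : σ ≠ 0) (ξ : K) (hξ : ξ ∉ Set.range (algebraMap F K)) :
    ((!![0,0,0,1; 0,1,σ,0; 0,0,1,0; 1,0,0,0] : Matrix (Fin 4) (Fin 4) F) = phiMat σ 0 1 1 0 ∧
      (0*0 + 1*1 : F) = 1) ∧
    (∀ a b c d : F, a*d + b*c = 1 →
      (!![1,0,0,0; 0,1,σ,0; 0,0,1,0; 0,0,0,1] : Matrix (Fin 4) (Fin 4) F) * phiMat σ a b c d =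
        phiMat σ a b c d * !![1,0,0,0; 0,1,σ,0; 0,0,1,0; 0,0,0,1]) ∧
    (((!![1,0,0,0; 0,1,σ,0; 0,0,1,0; 0,0,0,1] : Matrix (Fin 4) (Fin 4) F).map
          (algebraMap F K)).mulVec ![ξ, 0, 1, ξ] =
        ((!![0,0,0,1; 0,1,σ,0; 0,0,1,0; 1,0,0,0] : Matrix (Fin 4) (Fin 4) F).map
          (algebraMap F K)).mulVec ![ξ, 0, 1, ξ] ∧
      ((!![1,0,0,0; 0,1,σ,0; 0,0,1,0; 0,0,0,1] : Matrix (Fin 4) (Fin 4) F).map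
          (algebraMap F K)).mulVec ![ξ, 0, 1, ξ] = ![ξ, algebraMap F K σ, 1, ξ]) := by
  refine ⟨⟨?_, by ring⟩, ?_, ?_, ?_⟩
  · norm_num [phiMat]
  · intro a b c d h
    ext i j
    fin_cases i <;> fin_cases j <;>
      simp [phiMat, Matrix.mul_apply, Fin.sum_univ_four, Matrix.vecHead, Matrix.vecTail] <;> ring
  · funext i
    fin_cases i <;>
      simp [Matrix.mulVec, dotProduct, Fin.sum_univ_four]
  · funext i
    fin_cases i <;>
      simp [Matrix.mulVec, dotProduct, Fin.sum_univ_four]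
end
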